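/- arXiv:1803.07062 — 3 statements merged into one kernel-verified Lean document; each statement's English description precedes it below -/
import Mathlib

section
/- Let (E, 𝒜) be a measurable space and S a stochastic operator on the finite signed measures on E satisfying the Doeblin condition: there exist α ∈ (0,1) and a probability measure ν on E with Sμ ≥ α ν for every probability measure μ on E. Then for any two finite signed measures μ_1, μ_2 on E with μ_1(E) = μ_2(E), one has ‖S μ_1 − S μ_2‖_TV ≤ (1−α) ‖μ_1 − μ_2‖_TV. -/
open MeasureTheory Real Set

/-- Total variation norm of a finite signed measure. -/
noncomputable def tvNorm {E : Type*} [MeasurableSpace E] (μ : SignedMeasure E) : ℝ :=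
  (μ.totalVariation Set.univ).toReal

open scoped NNReal ENNReal

lemma nonneg_apply_le {E : Type*} [MeasurableSpace E] {σ : SignedMeasure E} (hσ : 0 ≤ σ)
    {i : Set E} (hi : MeasurableSet i) : σ i ≤ σ Set.univ := by
  have h0 : ∀ j : Set E, MeasurableSet j → 0 ≤ σ j := by
    intro j hj
    simpa using (MeasureTheory.VectorMeasure.le_iff.1 hσ) j hj
  have := MeasureTheory.VectorMeasure.of_union (disjoint_compl_right) hi hi.compl (v := σ)
  rw [Set.union_compl_self] at this
  have h2 := h0 iᶜ hi.compl
  linarith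

lemma nonneg_apply_nonneg {E : Type*} [MeasurableSpace E] {σ : SignedMeasure E} (hσ : 0 ≤ σ)
    {i : Set E} (hi : MeasurableSet i) : 0 ≤ σ i := by
  simpa using (MeasureTheory.VectorMeasure.le_iff.1 hσ) i hi

lemma tvNorm_sub_le {E : Type*} [MeasurableSpace E] {σ τ : SignedMeasure E}
    (hσ : 0 ≤ σ) (hτ : 0 ≤ τ) :
    tvNorm (σ - τ) ≤ σ Set.univ + τ Set.univ := by
  set ρ := σ - τ with hρ
  obtain ⟨i, hi₁, hi₂, hi₃, hp, hn⟩ := ρ.toJordanDecomposition_spec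
  have hpos : (ρ.toJordanDecomposition.posPart Set.univ).toReal = ρ i := by
    rw [hp, MeasureTheory.SignedMeasure.toMeasureOfZeroLE_apply _ hi₂ hi₁ MeasurableSet.univ]
    simp
  have hneg : (ρ.toJordanDecomposition.negPart Set.univ).toReal = -ρ iᶜ := by
    rw [hn, MeasureTheory.SignedMeasure.toMeasureOfLEZero_apply _ hi₃ hi₁.compl MeasurableSet.univ]
    simp
  have h1 : ρ i ≤ σ Set.univ := by
    have := nonneg_apply_nonneg hτ hi₁
    have := nonneg_apply_le hσ hi₁
    rw [hρ, MeasureTheory.VectorMeasure.sub_apply]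
    linarith
  have h2 : -ρ iᶜ ≤ τ Set.univ := by
    have := nonneg_apply_nonneg hσ hi₁.compl
    have := nonneg_apply_le hτ hi₁.compl
    rw [hρ, MeasureTheory.VectorMeasure.sub_apply]
    linarith
  have : tvNorm ρ = (ρ.toJordanDecomposition.posPart Set.univ).toReal
      + (ρ.toJordanDecomposition.negPart Set.univ).toReal := by
    rw [tvNorm, MeasureTheory.SignedMeasure.totalVariation, Measure.add_apply,
      ENNReal.toReal_add (measure_ne_top _ _) (measure_ne_top _ _)]
  rw [this, hpos, hneg]
  linarith

lemma tvNorm_smul' {E : Type*} [MeasurableSpace E] (r : ℝ≥0) (s : SignedMeasure E) :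
    tvNorm ((r : ℝ) • s) = (r : ℝ) * tvNorm s := by
  have h : ((r : ℝ) • s).toJordanDecomposition = r • s.toJordanDecomposition := by
    rw [MeasureTheory.SignedMeasure.toJordanDecomposition_smul_real,
      MeasureTheory.JordanDecomposition.coe_smul]
  rw [tvNorm, tvNorm, MeasureTheory.SignedMeasure.totalVariation,
    MeasureTheory.SignedMeasure.totalVariation, h,
    MeasureTheory.JordanDecomposition.smul_posPart,
    MeasureTheory.JordanDecomposition.smul_negPart,
    Measure.add_apply, Measure.add_apply, Measure.smul_apply, Measure.smul_apply,
    ← smul_add, ENNReal.toReal_smul]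
  rfl

/-- **Contraction under the Doeblin condition.**
Let `S` be a stochastic operator on the finite signed measures of a measurable space `E`
(linear, positivity-preserving and mass-preserving) satisfying the Doeblin condition:
there are `α ∈ (0,1)` and a probability measure `ν` with `S μ ≥ α ν` for every
probability measure `μ`.  Then for any finite signed measures `μ₁, μ₂` with the same
total mass, `‖S μ₁ - S μ₂‖_TV ≤ (1 - α) ‖μ₁ - μ₂‖_TV`. -/
theorem doeblin_contraction
    {E : Type*} [MeasurableSpace E]
    (S : SignedMeasure E →ₗ[ℝ] SignedMeasure E)
    (hpos : ∀ μ : SignedMeasure E, 0 ≤ μ → 0 ≤ S μ)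
    (hmass : ∀ μ : SignedMeasure E, (S μ) Set.univ = μ Set.univ)
    (α : ℝ) (hα : 0 < α) (hα1 : α < 1)
    (ν : Measure E) [IsProbabilityMeasure ν]
    (hDoeblin : ∀ μ : ProbabilityMeasure E,
      α • ν.toSignedMeasure ≤ S (μ : Measure E).toSignedMeasure)
    (μ₁ μ₂ : SignedMeasure E) (hmasseq : μ₁ Set.univ = μ₂ Set.univ) :
    tvNorm (S μ₁ - S μ₂) ≤ (1 - α) * tvNorm (μ₁ - μ₂) := by
  set ρ := μ₁ - μ₂ with hρdef
  have hSρ : S μ₁ - S μ₂ = S ρ := (map_sub S μ₁ μ₂).symm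
  have hρ0 : ρ Set.univ = 0 := by
    rw [hρdef, MeasureTheory.VectorMeasure.sub_apply, hmasseq, sub_self]
  set p := ρ.toJordanDecomposition.posPart with hpdef
  set q := ρ.toJordanDecomposition.negPart with hqdef
  have hrec : p.toSignedMeasure - q.toSignedMeasure = ρ := by
    have h := ρ.toSignedMeasure_toJordanDecomposition
    rw [MeasureTheory.JordanDecomposition.toSignedMeasure] at h
    exact h
  have hmassρ : (p Set.univ).toReal - (q Set.univ).toReal = 0 := by
    rw [← hρ0, ← hrec, Measure.toSignedMeasure_sub_apply MeasurableSet.univ]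
    rfl
  set c' : ℝ≥0 := (p Set.univ).toNNReal with hc'def
  have hcoep : p Set.univ = (c' : ℝ≥0∞) := (ENNReal.coe_toNNReal (measure_ne_top _ _)).symm
  have hcr : (c' : ℝ) = (p Set.univ).toReal := rfl
  have hqtr : (q Set.univ).toReal = (c' : ℝ) := by rw [hcr]; linarith
  have hcoeq : q Set.univ = (c' : ℝ≥0∞) := by
    rw [← hcoep]
    exact (ENNReal.toReal_eq_toReal_iff' (measure_ne_top _ _) (measure_ne_top _ _)).mp
      (by linarith)
  have htvρ : tvNorm ρ = (c' : ℝ) + (c' : ℝ) := by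
    rw [tvNorm, MeasureTheory.SignedMeasure.totalVariation, Measure.add_apply,
      ENNReal.toReal_add (measure_ne_top _ _) (measure_ne_top _ _), ← hpdef, ← hqdef,
      ← hcr, hqtr]
  by_cases hc0 : c' = 0
  · have hρz : ρ = 0 := by
      ext i hi
      rw [MeasureTheory.VectorMeasure.zero_apply]
      apply MeasureTheory.SignedMeasure.null_of_totalVariation_zero
      have huniv : ρ.totalVariation Set.univ = 0 := by
        rw [MeasureTheory.SignedMeasure.totalVariation, Measure.add_apply, ← hpdef, ← hqdef,
          hcoep, hcoeq, hc0]
        simp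
      exact le_antisymm (huniv ▸ measure_mono (Set.subset_univ i)) (zero_le)
    rw [hSρ, hρz, map_zero]
    simp [tvNorm, MeasureTheory.SignedMeasure.totalVariation_zero]
  · -- normalized measures
    set P : Measure E := c'⁻¹ • p with hPdef
    set Q : Measure E := c'⁻¹ • q with hQdef
    have hPuniv : P Set.univ = 1 := by
      rw [hPdef, Measure.smul_apply, hcoep]
      simp [ENNReal.smul_def, ← ENNReal.coe_mul, inv_mul_cancel₀ hc0]
    have hQuniv : Q Set.univ = 1 := by
      rw [hQdef, Measure.smul_apply, hcoeq]
      simp [ENNReal.smul_def, ← ENNReal.coe_mul, inv_mul_cancel₀ hc0]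
    haveI instP : IsProbabilityMeasure P := ⟨hPuniv⟩
    haveI instQ : IsProbabilityMeasure Q := ⟨hQuniv⟩
    have hpP : p = c' • P := by
      rw [hPdef, smul_smul, mul_inv_cancel₀ hc0, one_smul]
    have hqQ : q = c' • Q := by
      rw [hQdef, smul_smul, mul_inv_cancel₀ hc0, one_smul]
    have hps : p.toSignedMeasure = (c' : ℝ) • P.toSignedMeasure := by
      ext i hi
      rw [Measure.toSignedMeasure_apply_measurable hi,
        MeasureTheory.VectorMeasure.smul_apply,
        Measure.toSignedMeasure_apply_measurable hi, hpP, Measure.real, Measure.real, Measure.smul_apply,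
        ENNReal.toReal_smul]
      simp [NNReal.smul_def]
    have hqs : q.toSignedMeasure = (c' : ℝ) • Q.toSignedMeasure := by
      ext i hi
      rw [Measure.toSignedMeasure_apply_measurable hi,
        MeasureTheory.VectorMeasure.smul_apply,
        Measure.toSignedMeasure_apply_measurable hi, hqQ, Measure.real, Measure.real, Measure.smul_apply,
        ENNReal.toReal_smul]
      simp [NNReal.smul_def]
    have hD1 : α • ν.toSignedMeasure ≤ S P.toSignedMeasure :=
      hDoeblin ⟨P, instP⟩
    have hD2 : α • ν.toSignedMeasure ≤ S Q.toSignedMeasure :=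
      hDoeblin ⟨Q, instQ⟩
    set σ : SignedMeasure E := S P.toSignedMeasure - α • ν.toSignedMeasure with hσdef
    set τ : SignedMeasure E := S Q.toSignedMeasure - α • ν.toSignedMeasure with hτdef
    have hσ0 : 0 ≤ σ := sub_nonneg.mpr hD1
    have hτ0 : 0 ≤ τ := sub_nonneg.mpr hD2
    have hνs : ν.toSignedMeasure Set.univ = 1 := by
      rw [Measure.toSignedMeasure_apply_measurable MeasurableSet.univ, Measure.real, measure_univ,
        ENNReal.toReal_one]
    have hσm : σ Set.univ = 1 - α := by
      rw [hσdef, MeasureTheory.VectorMeasure.sub_apply,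
        MeasureTheory.VectorMeasure.smul_apply, hmass,
        Measure.toSignedMeasure_apply_measurable MeasurableSet.univ, Measure.real, hPuniv, hνs,
        ENNReal.toReal_one, smul_eq_mul, mul_one]
    have hτm : τ Set.univ = 1 - α := by
      rw [hτdef, MeasureTheory.VectorMeasure.sub_apply,
        MeasureTheory.VectorMeasure.smul_apply, hmass,
        Measure.toSignedMeasure_apply_measurable MeasurableSet.univ, Measure.real, hQuniv, hνs,
        ENNReal.toReal_one, smul_eq_mul, mul_one]
    have hστ : σ - τ = S P.toSignedMeasure - S Q.toSignedMeasure := by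
      rw [hσdef, hτdef]; abel
    have hkey : S ρ = (c' : ℝ) • (σ - τ) := by
      rw [← hrec, map_sub, hps, hqs, S.map_smul, S.map_smul, ← smul_sub, hστ]
    have hbound : tvNorm (σ - τ) ≤ (1 - α) + (1 - α) := by
      have := tvNorm_sub_le hσ0 hτ0
      rwa [hσm, hτm] at this
    rw [hSρ, hkey, tvNorm_smul', htvρ]
    calc (c' : ℝ) * tvNorm (σ - τ) ≤ (c' : ℝ) * ((1 - α) + (1 - α)) :=
          mul_le_mul_of_nonneg_left hbound c'.coe_nonneg
      _ = (1 - α) * ((c' : ℝ) + (c' : ℝ)) := by ring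
end

section
/- Assume p is bounded, Lipschitz and nonnegative, let L be its Lipschitz constant with respect to the first variable, and let n be a finite nonnegative Borel measure on [0,∞) with L < 1/‖n‖_TV. Then there exists a unique N ∈ ℝ satisfying N = ∫_0^∞ p(N,s) dn(s). Moreover, if n_1, n_2 are two such measures (with L < 1/‖n_1‖_TV) and N_1, N_2 are the corresponding solutions, then |N_1 − N_2| ≤ ‖p‖_∞ ‖n_1 − n_2‖_TV / (1 − L‖n_1‖_TV). -/
open MeasureTheory Real Set

/-- Total variation distance between two (finite) nonnegative Borel measures:
`‖μ - ν‖_TV = sup_A [(μ(A) - ν(A)) + (ν(Aᶜ) - μ(Aᶜ))]`. -/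
noncomputable def tvDist (μ ν : Measure ℝ) : ℝ :=
  sSup {r : ℝ | ∃ A : Set ℝ, MeasurableSet A ∧
    r = (((μ A).toReal - (ν A).toReal) + ((ν Aᶜ).toReal - (μ Aᶜ).toReal))}

lemma tvDist_set_bddAbove (μ ν : Measure ℝ) [IsFiniteMeasure μ] [IsFiniteMeasure ν] :
    BddAbove {r : ℝ | ∃ A : Set ℝ, MeasurableSet A ∧
      r = (((μ A).toReal - (ν A).toReal) + ((ν Aᶜ).toReal - (μ Aᶜ).toReal))} := by
  refine ⟨(μ Set.univ).toReal + (ν Set.univ).toReal, ?_⟩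
  rintro r ⟨A, hA, rfl⟩
  have h1 : (μ A).toReal ≤ (μ Set.univ).toReal :=
    ENNReal.toReal_mono (measure_ne_top _ _) (measure_mono (subset_univ _))
  have h2 : (ν Aᶜ).toReal ≤ (ν Set.univ).toReal :=
    ENNReal.toReal_mono (measure_ne_top _ _) (measure_mono (subset_univ _))
  have h3 : 0 ≤ (ν A).toReal := ENNReal.toReal_nonneg
  have h4 : 0 ≤ (μ Aᶜ).toReal := ENNReal.toReal_nonneg
  linarith

lemma le_tvDist (μ ν : Measure ℝ) [IsFiniteMeasure μ] [IsFiniteMeasure ν]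
    (A : Set ℝ) (hA : MeasurableSet A) :
    (((μ A).toReal - (ν A).toReal) + ((ν Aᶜ).toReal - (μ Aᶜ).toReal)) ≤ tvDist μ ν :=
  le_csSup (tvDist_set_bddAbove μ ν) ⟨A, hA, rfl⟩

lemma tvDist_symm (μ ν : Measure ℝ) : tvDist μ ν = tvDist ν μ := by
  unfold tvDist
  congr 1
  ext r
  constructor
  · rintro ⟨A, hA, rfl⟩
    exact ⟨Aᶜ, hA.compl, by rw [compl_compl]; ring⟩
  · rintro ⟨A, hA, rfl⟩
    exact ⟨Aᶜ, hA.compl, by rw [compl_compl]; ring⟩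

lemma integral_diff_le_tvDist (μ ν : Measure ℝ) [IsFiniteMeasure μ] [IsFiniteMeasure ν]
    (g : ℝ → ℝ) (hg : Continuous g) (P : ℝ) (hg0 : ∀ s, 0 ≤ g s) (hgP : ∀ s, g s ≤ P) :
    ∫ s, g s ∂μ - ∫ s, g s ∂ν ≤ P * tvDist μ ν := by
  have hP0 : 0 ≤ P := le_trans (hg0 0) (hgP 0)
  obtain ⟨s, hs, hsub1, hsub2⟩ := hahn_decomposition (μ := μ) (ν := ν)
  have hint : ∀ (m : Measure ℝ) [IsFiniteMeasure m], Integrable g m := fun m _ =>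
    (integrable_const P).mono' hg.aestronglyMeasurable
      (ae_of_all _ fun x => by rw [Real.norm_eq_abs, abs_of_nonneg (hg0 x)]; exact hgP x)
  haveI hfin : ∀ (m : Measure ℝ) [IsFiniteMeasure m] (t : Set ℝ), IsFiniteMeasure (m.restrict t) :=
    fun m _ t => ⟨by rw [Measure.restrict_apply_univ]; exact measure_lt_top m t⟩
  haveI := hfin μ s; haveI := hfin ν s; haveI := hfin μ sᶜ; haveI := hfin ν sᶜ
  have hres1 : ν.restrict s ≤ μ.restrict s := by
    refine Measure.le_iff.2 fun t ht => ?_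
    rw [Measure.restrict_apply ht, Measure.restrict_apply ht]
    exact hsub1 _ (ht.inter hs) inter_subset_right
  have hres2 : μ.restrict sᶜ ≤ ν.restrict sᶜ := by
    refine Measure.le_iff.2 fun t ht => ?_
    rw [Measure.restrict_apply ht, Measure.restrict_apply ht]
    exact hsub2 _ (ht.inter hs.compl) inter_subset_right
  have h2 : ∫ x in sᶜ, g x ∂μ ≤ ∫ x in sᶜ, g x ∂ν :=
    integral_mono_measure hres2 (ae_of_all _ hg0) ((hint ν).restrict)
  have hPg : ∫ x in s, (P - g x) ∂ν ≤ ∫ x in s, (P - g x) ∂μ :=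
    integral_mono_measure hres1 (ae_of_all _ fun x => by simp [hgP x])
      (((integrable_const P).restrict).sub ((hint μ).restrict))
  have hexp : ∀ (m : Measure ℝ) [IsFiniteMeasure m],
      ∫ x in s, (P - g x) ∂m = (m s).toReal * P - ∫ x in s, g x ∂m := by
    intro m _
    rw [integral_sub (integrable_const P) ((hint m).restrict), integral_const,
      measureReal_def, Measure.restrict_apply_univ, smul_eq_mul]
  rw [hexp μ, hexp ν] at hPg
  have h1 : ∫ x in s, g x ∂μ - ∫ x in s, g x ∂ν ≤ P * ((μ s).toReal - (ν s).toReal) := by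
    nlinarith [hPg]
  have hcompl : 0 ≤ (ν sᶜ).toReal - (μ sᶜ).toReal := by
    have h := hsub2 sᶜ hs.compl subset_rfl
    have := ENNReal.toReal_mono (measure_ne_top ν _) h
    linarith
  have hkey : ((μ s).toReal - (ν s).toReal) ≤ tvDist μ ν := by
    have := le_tvDist μ ν s hs
    linarith
  have hsplitμ : ∫ x in s, g x ∂μ + ∫ x in sᶜ, g x ∂μ = ∫ x, g x ∂μ :=
    integral_add_compl hs (hint μ)
  have hsplitν : ∫ x in s, g x ∂ν + ∫ x in sᶜ, g x ∂ν = ∫ x, g x ∂ν :=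
    integral_add_compl hs (hint ν)
  nlinarith [mul_le_mul_of_nonneg_left hkey hP0]

lemma abs_integral_diff_le_tvDist (μ ν : Measure ℝ) [IsFiniteMeasure μ] [IsFiniteMeasure ν]
    (g : ℝ → ℝ) (hg : Continuous g) (P : ℝ) (hg0 : ∀ s, 0 ≤ g s) (hgP : ∀ s, g s ≤ P) :
    |∫ s, g s ∂μ - ∫ s, g s ∂ν| ≤ P * tvDist μ ν := by
  rw [abs_le]
  constructor
  · have := integral_diff_le_tvDist ν μ g hg P hg0 hgP
    rw [tvDist_symm ν μ] at this
    linarith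
  · exact integral_diff_le_tvDist μ ν g hg P hg0 hgP

/-- **Existence, uniqueness and stability of the total firing rate.**
Assume `p : [0,∞) × [0,∞) → [0,∞)` is bounded (with supremum `P`), Lipschitz
(jointly in both variables), and `L` is the smallest constant such that
`|p(N₁,s) - p(N₂,s)| ≤ L |N₁ - N₂|`.  Then for any finite nonnegative Borel measure `n`
supported on `[0,∞)` with `L ‖n‖_TV < 1` there is a unique `N` with
`N = ∫ p(N,s) dn(s)`, and if `n₁, n₂` are two such measures with corresponding
solutions `N₁, N₂`, then `|N₁ - N₂| ≤ P ‖n₁ - n₂‖_TV / (1 - L ‖n₁‖_TV)`. -/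
theorem firing_rate_fixed_point
    (p : ℝ → ℝ → ℝ) (L P : ℝ)
    (hp_nonneg : ∀ N s, 0 ≤ N → 0 ≤ s → 0 ≤ p N s)
    (hp_lip : ∃ K : ℝ, ∀ N₁ s₁ N₂ s₂, 0 ≤ N₁ → 0 ≤ s₁ → 0 ≤ N₂ → 0 ≤ s₂ →
      |p N₁ s₁ - p N₂ s₂| ≤ K * (|N₁ - N₂| + |s₁ - s₂|))
    (hP : ∀ N s, 0 ≤ N → 0 ≤ s → p N s ≤ P)
    (hPleast : ∀ P' : ℝ, (∀ N s, 0 ≤ N → 0 ≤ s → p N s ≤ P') → P ≤ P')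
    (hL : ∀ N₁ N₂ s, 0 ≤ N₁ → 0 ≤ N₂ → 0 ≤ s → |p N₁ s - p N₂ s| ≤ L * |N₁ - N₂|)
    (hLleast : ∀ L' : ℝ,
      (∀ N₁ N₂ s, 0 ≤ N₁ → 0 ≤ N₂ → 0 ≤ s → |p N₁ s - p N₂ s| ≤ L' * |N₁ - N₂|) →
      L ≤ L') :
    (∀ n : Measure ℝ, IsFiniteMeasure n → n (Set.Iio 0) = 0 →
      L * (n Set.univ).toReal < 1 →
      ∃! N : ℝ, 0 ≤ N ∧ N = ∫ s, p N s ∂n) ∧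
    (∀ n₁ n₂ : Measure ℝ, IsFiniteMeasure n₁ → IsFiniteMeasure n₂ →
      n₁ (Set.Iio 0) = 0 → n₂ (Set.Iio 0) = 0 →
      L * (n₁ Set.univ).toReal < 1 → L * (n₂ Set.univ).toReal < 1 →
      ∀ N₁ N₂ : ℝ, 0 ≤ N₁ → 0 ≤ N₂ →
        N₁ = ∫ s, p N₁ s ∂n₁ → N₂ = ∫ s, p N₂ s ∂n₂ →
        |N₁ - N₂| ≤ P * tvDist n₁ n₂ / (1 - L * (n₁ Set.univ).toReal)) := by
  obtain ⟨K, hK⟩ := hp_lip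
  have hK0 : 0 ≤ K := by
    have h := hK 0 0 1 0 le_rfl le_rfl zero_le_one le_rfl
    simp at h
    nlinarith [abs_nonneg (p 0 0 - p 1 0)]
  have hL0 : 0 ≤ L := by
    have h := hL 0 1 0 le_rfl zero_le_one le_rfl
    simp at h
    nlinarith [abs_nonneg (p 0 0 - p 1 0)]
  have hP0 : 0 ≤ P := le_trans (hp_nonneg 0 0 le_rfl le_rfl) (hP 0 0 le_rfl le_rfl)
  -- the continuous extension in the second variable
  set g : ℝ → ℝ → ℝ := fun N s => p N (max s 0) with hg_def
  have hg_cont : ∀ N, 0 ≤ N → Continuous (g N) := by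
    intro N hN
    have hlip : LipschitzWith (Real.toNNReal K) (g N) := by
      apply LipschitzWith.of_dist_le_mul
      intro a b
      rw [Real.dist_eq, Real.dist_eq, Real.coe_toNNReal _ hK0]
      calc |g N a - g N b| ≤ K * (|N - N| + |max a 0 - max b 0|) :=
            hK N (max a 0) N (max b 0) hN (le_max_right _ _) hN (le_max_right _ _)
        _ = K * |max a 0 - max b 0| := by rw [sub_self, abs_zero, zero_add]
        _ ≤ K * |a - b| := mul_le_mul_of_nonneg_left (abs_max_sub_max_le_abs a b 0) hK0
    exact hlip.continuous
  have hg0 : ∀ N, 0 ≤ N → ∀ s, 0 ≤ g N s := fun N hN s =>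
    hp_nonneg N _ hN (le_max_right s 0)
  have hgP : ∀ N, 0 ≤ N → ∀ s, g N s ≤ P := fun N hN s =>
    hP N _ hN (le_max_right s 0)
  have hae_nonneg : ∀ (n : Measure ℝ), n (Set.Iio 0) = 0 → ∀ᵐ s ∂n, 0 ≤ s := by
    intro n hn
    rw [ae_iff]
    convert hn using 2
    ext s
    simp
  have hg_ae : ∀ (n : Measure ℝ), n (Set.Iio 0) = 0 → ∀ N,
      (fun s => p N s) =ᵐ[n] g N := by
    intro n hn N
    filter_upwards [hae_nonneg n hn] with s hs
    simp only [hg_def]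
    rw [max_eq_left hs]
  have hieq : ∀ (n : Measure ℝ), n (Set.Iio 0) = 0 → ∀ N,
      ∫ s, p N s ∂n = ∫ s, g N s ∂n := fun n hn N => integral_congr_ae (hg_ae n hn N)
  have hint : ∀ (n : Measure ℝ), IsFiniteMeasure n → n (Set.Iio 0) = 0 → ∀ N, 0 ≤ N →
      Integrable (fun s => p N s) n := by
    intro n hfin hn N hN
    haveI := hfin
    have h : Integrable (g N) n :=
      (integrable_const P).mono' ((hg_cont N hN).aestronglyMeasurable)
        (ae_of_all _ fun x => by
          rw [Real.norm_eq_abs, abs_of_nonneg (hg0 N hN x)]; exact hgP N hN x)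
    exact h.congr ((hg_ae n hn N).symm)
  have hcontr : ∀ (n : Measure ℝ), IsFiniteMeasure n → n (Set.Iio 0) = 0 →
      ∀ N₁ N₂ : ℝ, 0 ≤ N₁ → 0 ≤ N₂ →
      |(∫ s, p N₁ s ∂n) - ∫ s, p N₂ s ∂n| ≤ L * (n Set.univ).toReal * |N₁ - N₂| := by
    intro n hfin hn N₁ N₂ h1 h2
    haveI := hfin
    have i1 := hint n hfin hn N₁ h1
    have i2 := hint n hfin hn N₂ h2
    rw [← integral_sub i1 i2]
    have habs : |∫ s, (p N₁ s - p N₂ s) ∂n| ≤ ∫ s, |p N₁ s - p N₂ s| ∂n := by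
      simpa [Real.norm_eq_abs] using
        norm_integral_le_integral_norm (μ := n) (fun s => p N₁ s - p N₂ s)
    refine habs.trans ?_
    have hmono : ∫ s, |p N₁ s - p N₂ s| ∂n ≤ ∫ _s, L * |N₁ - N₂| ∂n := by
      apply integral_mono_ae (i1.sub i2).abs (integrable_const _)
      filter_upwards [hae_nonneg n hn] with s hs
      exact hL N₁ N₂ s h1 h2 hs
    refine hmono.trans ?_
    rw [integral_const, smul_eq_mul]
    exact le_of_eq (by rw [measureReal_def]; ring)
  constructor
  · -- existence and uniqueness
    intro n hfin hn hκ
    haveI := hfin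
    set κ := L * (n Set.univ).toReal with hκdef
    have hκ0 : 0 ≤ κ := mul_nonneg hL0 ENNReal.toReal_nonneg
    set f : ℝ → ℝ := fun x => ∫ s, p (max x 0) s ∂n with hf_def
    have hf_lip : ∀ x y, dist (f x) (f y) ≤ κ * dist x y := by
      intro x y
      rw [Real.dist_eq, Real.dist_eq]
      calc |f x - f y| ≤ κ * |max x 0 - max y 0| :=
            hcontr n hfin hn _ _ (le_max_right _ _) (le_max_right _ _)
        _ ≤ κ * |x - y| := mul_le_mul_of_nonneg_left (abs_max_sub_max_le_abs x y 0) hκ0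
    have hcw : ContractingWith κ.toNNReal f := by
      constructor
      · have h1 : (κ.toNNReal : ℝ) < 1 := by rw [Real.coe_toNNReal _ hκ0]; exact hκ
        exact_mod_cast h1
      · apply LipschitzWith.of_dist_le_mul
        intro x y
        rw [Real.coe_toNNReal _ hκ0]
        exact hf_lip x y
    set N₀ := ContractingWith.fixedPoint f hcw with hN₀def
    have hfix : f N₀ = N₀ := hcw.fixedPoint_isFixedPt
    have hN₀0 : 0 ≤ N₀ := by
      rw [← hfix]
      apply integral_nonneg_of_ae
      filter_upwards [hae_nonneg n hn] with s hs
      exact hp_nonneg _ s (le_max_right _ _) hs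
    have hN₀eq : N₀ = ∫ s, p N₀ s ∂n := by
      conv_lhs => rw [← hfix]
      show (∫ s, p (max N₀ 0) s ∂n) = _
      rw [max_eq_left hN₀0]
    refine ⟨N₀, ⟨hN₀0, hN₀eq⟩, ?_⟩
    rintro N' ⟨hN'0, hN'eq⟩
    have h := hcontr n hfin hn N' N₀ hN'0 hN₀0
    rw [← hN'eq, ← hN₀eq] at h
    have h0 : |N' - N₀| ≤ 0 := by nlinarith [abs_nonneg (N' - N₀)]
    have h1 := le_antisymm h0 (abs_nonneg _)
    rw [abs_eq_zero, sub_eq_zero] at h1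
    exact h1
  · -- stability
    intro n₁ n₂ hf1 hf2 hn1 hn2 hκ1 hκ2 N₁ N₂ hN₁0 hN₂0 hN₁ hN₂
    haveI := hf1; haveI := hf2
    have step1 : |(∫ s, p N₂ s ∂n₁) - ∫ s, p N₂ s ∂n₂| ≤ P * tvDist n₁ n₂ := by
      rw [hieq n₁ hn1 N₂, hieq n₂ hn2 N₂]
      exact abs_integral_diff_le_tvDist n₁ n₂ (g N₂) (hg_cont N₂ hN₂0) P
        (hg0 N₂ hN₂0) (hgP N₂ hN₂0)
    have step2 := hcontr n₁ hf1 hn1 N₁ N₂ hN₁0 hN₂0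
    rw [← hN₂] at step1
    rw [← hN₁] at step2
    have key : |N₁ - N₂| ≤ L * (n₁ Set.univ).toReal * |N₁ - N₂| + P * tvDist n₁ n₂ := by
      calc |N₁ - N₂|
          = |(N₁ - ∫ s, p N₂ s ∂n₁) + ((∫ s, p N₂ s ∂n₁) - N₂)| := by congr 1; ring
        _ ≤ |N₁ - ∫ s, p N₂ s ∂n₁| + |(∫ s, p N₂ s ∂n₁) - N₂| := abs_add_le _ _
        _ ≤ _ := add_le_add step2 step1
    rw [le_div_iff₀ (by linarith : (0:ℝ) < 1 - L * (n₁ Set.univ).toReal)]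
    nlinarith [key]
end

section
/- Assume p : [0,∞) × [0,∞) → [0,∞) is bounded and Lipschitz, with p_min·1_{[s_*,∞)}(s) ≤ p(N,s) ≤ p_max for all N, s ≥ 0 (where s_*, p_min, p_max > 0), and that its Lipschitz constant L with respect to the first variable satisfies L < (p_max)^{−2} (s_*²/2 + s_*/p_min + 1/p_min²)^{−1}. Then there exists a unique N_* > 0 such that N_* · ∫_0^∞ exp(−∫_0^s p(N_*,τ) dτ) ds = 1; consequently, the probability measure n_* with density s ↦ N_* exp(−∫_0^s p(N_*,τ) dτ) with respect to Lebesgue measure is the unique probability measure that is a stationary solution of the age-structured model, i.e., the unique probability measure with a C¹ density n_* satisfying ∂_s n_*(s) + p(N_*,s) n_*(s) = 0 for s > 0 and n_*(0) = N_* = ∫_0^∞ p(N_*,s) n_*(s) ds. -/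
open MeasureTheory Real Set Filter Topology

/-- `f` is (the density of) a stationary solution of the nonlinear age-structured model,
with global activity `N`: `f ∈ C([0,∞)) ∩ C¹((0,∞))` is a nonnegative probability
density satisfying `∂_s f(s) + p(N,s) f(s) = 0` for `s > 0` and
`f(0) = N = ∫_0^∞ p(N,s) f(s) ds`. -/
def IsStationaryDensityAge (p : ℝ → ℝ → ℝ) (f : ℝ → ℝ) (N : ℝ) : Prop :=
  ContinuousOn f (Set.Ici 0) ∧
  (∀ s ∈ Set.Ioi (0:ℝ), HasDerivAt f (-(p N s * f s)) s) ∧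
  (∀ s ∈ Set.Ici (0:ℝ), 0 ≤ f s) ∧
  (∫ s in Set.Ici (0:ℝ), f s) = 1 ∧
  f 0 = N ∧
  N = ∫ s in Set.Ici (0:ℝ), p N s * f s

noncomputable section AgeAux

namespace AgeAux

/-- Modified rate, globally defined and continuous. -/
def qfun (p : ℝ → ℝ → ℝ) (N s : ℝ) : ℝ := p (max N 0) (max s 0)

/-- Cumulative hazard. -/
def Bfun (p : ℝ → ℝ → ℝ) (N s : ℝ) : ℝ := ∫ τ in (0:ℝ)..s, qfun p N τ

/-- Normalization integral. -/
def Ifun (p : ℝ → ℝ → ℝ) (N : ℝ) : ℝ := ∫ s in Set.Ici (0:ℝ), Real.exp (-(Bfun p N s))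

/-- Elementary estimate for differences of exponentials. -/
theorem expdiff {x y c : ℝ} (hx : c ≤ x) (hy : c ≤ y) :
    |Real.exp (-x) - Real.exp (-y)| ≤ |x - y| * Real.exp (-c) := by
  wlog h : y ≤ x generalizing x y
  · rw [abs_sub_comm, abs_sub_comm x y]; exact this hy hx (le_of_not_ge h)
  have h1 : Real.exp (-x) ≤ Real.exp (-y) := Real.exp_le_exp.2 (neg_le_neg h)
  rw [abs_of_nonpos (by linarith), abs_of_nonneg (by linarith), neg_sub]
  have h2 : Real.exp (-y) - Real.exp (-x) = Real.exp (-y) * (1 - Real.exp (y - x)) := by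
    rw [mul_sub, mul_one, ← Real.exp_add]; ring_nf
  rw [h2]
  have h3 : 1 - Real.exp (y - x) ≤ x - y := by
    have := Real.add_one_le_exp (y - x); linarith
  have h4 : 0 ≤ 1 - Real.exp (y - x) := by
    have : Real.exp (y - x) ≤ Real.exp 0 := Real.exp_le_exp.2 (by linarith)
    rw [Real.exp_zero] at this; linarith
  have h5 : Real.exp (-y) ≤ Real.exp (-c) := Real.exp_le_exp.2 (neg_le_neg hy)
  calc Real.exp (-y) * (1 - Real.exp (y - x)) ≤ Real.exp (-c) * (x - y) :=
        mul_le_mul h5 h3 h4 (Real.exp_pos _).le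
    _ = (x - y) * Real.exp (-c) := by ring

/-- Constancy from vanishing derivative on the interior. -/
theorem const_of_deriv0 {h : ℝ → ℝ} (hcont : ContinuousOn h (Ici 0))
    (hder : ∀ s ∈ Ioi (0:ℝ), HasDerivAt h 0 s) {b : ℝ} (hb : 0 ≤ b) : h b = h 0 := by
  rcases hb.eq_or_lt with rfl | hb
  · rfl
  have hC : ContinuousOn h (Icc 0 b) := hcont.mono Icc_subset_Ici_self
  have hdiff : DifferentiableOn ℝ h (interior (Icc 0 b)) := by
    rw [interior_Icc]; exact fun x hx => ((hder x hx.1).differentiableAt).differentiableWithinAt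
  have hd0 : ∀ x ∈ interior (Icc 0 b), deriv h x = 0 := by
    rw [interior_Icc]; exact fun x hx => (hder x hx.1).deriv
  have hmono := monotoneOn_of_deriv_nonneg (convex_Icc 0 b) hC hdiff (fun x hx => (hd0 x hx).ge)
  have hanti := antitoneOn_of_deriv_nonpos (convex_Icc 0 b) hC hdiff (fun x hx => (hd0 x hx).le)
  exact le_antisymm (hanti (left_mem_Icc.2 hb.le) (right_mem_Icc.2 hb.le) hb.le)
    (hmono (left_mem_Icc.2 hb.le) (right_mem_Icc.2 hb.le) hb.le)

variable {p : ℝ → ℝ → ℝ} {L pmin pmax sstar : ℝ}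

theorem qcont (hp_lip : ∃ K : ℝ, ∀ N₁ s₁ N₂ s₂, 0 ≤ N₁ → 0 ≤ s₁ → 0 ≤ N₂ → 0 ≤ s₂ →
      |p N₁ s₁ - p N₂ s₂| ≤ K * (|N₁ - N₂| + |s₁ - s₂|)) (N : ℝ) :
    Continuous (qfun p N) := by
  obtain ⟨K, hK⟩ := hp_lip
  refine LipschitzWith.continuous (K := K.toNNReal) ?_
  rw [lipschitzWith_iff_dist_le_mul]
  intro x y
  rw [Real.dist_eq, Real.dist_eq, Real.coe_toNNReal']
  have h1 := hK (max N 0) (max x 0) (max N 0) (max y 0) (le_max_right _ _)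
    (le_max_right _ _) (le_max_right _ _) (le_max_right _ _)
  have h2 : |max x 0 - max y 0| ≤ |x - y| := abs_max_sub_max_le_abs x y 0
  calc |qfun p N x - qfun p N y| ≤ K * (|max N 0 - max N 0| + |max x 0 - max y 0|) := h1
    _ = K * |max x 0 - max y 0| := by rw [sub_self, abs_zero, zero_add]
    _ ≤ max K 0 * |x - y| :=
      mul_le_mul (le_max_left _ _) h2 (abs_nonneg _) (le_max_right _ _)

theorem q_nonneg (hp_nonneg : ∀ N s, 0 ≤ N → 0 ≤ s → 0 ≤ p N s) (N s : ℝ) :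
    0 ≤ qfun p N s := hp_nonneg _ _ (le_max_right _ _) (le_max_right _ _)

theorem q_lip (hL : ∀ N₁ N₂ s, 0 ≤ N₁ → 0 ≤ N₂ → 0 ≤ s → |p N₁ s - p N₂ s| ≤ L * |N₁ - N₂|)
    (hL0 : 0 ≤ L) (N₁ N₂ s : ℝ) : |qfun p N₁ s - qfun p N₂ s| ≤ L * |N₁ - N₂| := by
  calc |qfun p N₁ s - qfun p N₂ s| ≤ L * |max N₁ 0 - max N₂ 0| :=
        hL _ _ _ (le_max_right _ _) (le_max_right _ _) (le_max_right _ _)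
    _ ≤ L * |N₁ - N₂| := mul_le_mul_of_nonneg_left (abs_max_sub_max_le_abs _ _ _) hL0

variable (hp_lip : ∃ K : ℝ, ∀ N₁ s₁ N₂ s₂, 0 ≤ N₁ → 0 ≤ s₁ → 0 ≤ N₂ → 0 ≤ s₂ →
      |p N₁ s₁ - p N₂ s₂| ≤ K * (|N₁ - N₂| + |s₁ - s₂|))
  (hp_nonneg : ∀ N s, 0 ≤ N → 0 ≤ s → 0 ≤ p N s)

include hp_lip

theorem B_hasDerivAt (N s : ℝ) : HasDerivAt (Bfun p N) (qfun p N s) s :=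
  ((qcont hp_lip N).integral_hasStrictDerivAt 0 s).hasDerivAt

theorem B_cont (N : ℝ) : Continuous (Bfun p N) := by
  have h : Differentiable ℝ (Bfun p N) := fun s => (B_hasDerivAt hp_lip N s).differentiableAt
  exact h.continuous

theorem B_intble (N a b : ℝ) : IntervalIntegrable (qfun p N) volume a b :=
  (qcont hp_lip N).intervalIntegrable a b

include hp_nonneg

theorem B_nonneg (N : ℝ) {s : ℝ} (hs : 0 ≤ s) : 0 ≤ Bfun p N s :=
  intervalIntegral.integral_nonneg hs (fun τ _ => q_nonneg hp_nonneg N τ)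

theorem B_le (hp_up : ∀ N s, 0 ≤ N → 0 ≤ s → p N s ≤ pmax) (N : ℝ) {s : ℝ} (hs : 0 ≤ s) :
    Bfun p N s ≤ pmax * s := by
  have := intervalIntegral.integral_mono_on (μ := volume) hs (B_intble hp_lip N 0 s)
    intervalIntegrable_const (fun x _ => hp_up _ _ (le_max_right _ _) (le_max_right _ _))
  simpa [mul_comm, Bfun] using this

theorem B_low (hp_low : ∀ N s, 0 ≤ N → sstar ≤ s → pmin ≤ p N s) (hpmin : 0 < pmin)
    (hsstar : 0 < sstar) (N : ℝ) {s : ℝ} (hs : 0 ≤ s) : pmin * (s - sstar) ≤ Bfun p N s := by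
  rcases le_or_gt s sstar with h | h
  · have h1 : pmin * (s - sstar) ≤ 0 := mul_nonpos_of_nonneg_of_nonpos hpmin.le (by linarith)
    exact h1.trans (B_nonneg hp_lip hp_nonneg N hs)
  · have hsplit := intervalIntegral.integral_add_adjacent_intervals
      (B_intble hp_lip N 0 sstar) (B_intble hp_lip N sstar s)
    have h1 : 0 ≤ ∫ τ in (0:ℝ)..sstar, qfun p N τ :=
      intervalIntegral.integral_nonneg hsstar.le (fun τ _ => q_nonneg hp_nonneg N τ)
    have h2 : pmin * (s - sstar) ≤ ∫ τ in sstar..s, qfun p N τ := by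
      have := intervalIntegral.integral_mono_on (μ := volume) h.le
        intervalIntegrable_const (B_intble hp_lip N sstar s)
        (fun x hx => hp_low _ _ (le_max_right _ _) (hx.1.trans (le_max_left _ _)))
      simpa [mul_comm] using this
    show pmin * (s - sstar) ≤ ∫ τ in (0:ℝ)..s, qfun p N τ
    rw [← hsplit]; linarith

omit hp_nonneg

theorem B_lipN (hL : ∀ N₁ N₂ s, 0 ≤ N₁ → 0 ≤ N₂ → 0 ≤ s → |p N₁ s - p N₂ s| ≤ L * |N₁ - N₂|)
    (hL0 : 0 ≤ L) (N₁ N₂ : ℝ) {s : ℝ} (hs : 0 ≤ s) :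
    |Bfun p N₁ s - Bfun p N₂ s| ≤ L * |N₁ - N₂| * s := by
  have hsub : Bfun p N₁ s - Bfun p N₂ s
      = ∫ τ in (0:ℝ)..s, (qfun p N₁ τ - qfun p N₂ τ) :=
    (intervalIntegral.integral_sub (B_intble hp_lip N₁ 0 s) (B_intble hp_lip N₂ 0 s)).symm
  rw [hsub]
  have := intervalIntegral.norm_integral_le_of_norm_le_const
    (C := L * |N₁ - N₂|) (f := fun τ => qfun p N₁ τ - qfun p N₂ τ) (a := 0) (b := s)
    (fun x _ => q_lip hL hL0 N₁ N₂ x)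
  simpa [abs_of_nonneg hs] using this

include hp_nonneg

theorem expB_le (hp_low : ∀ N s, 0 ≤ N → sstar ≤ s → pmin ≤ p N s) (hpmin : 0 < pmin)
    (hsstar : 0 < sstar) (N : ℝ) {s : ℝ} (hs : 0 ≤ s) :
    Real.exp (-(Bfun p N s)) ≤ Real.exp (pmin * sstar) * Real.exp (-pmin * s) := by
  rw [← Real.exp_add]
  apply Real.exp_le_exp.2
  have := B_low hp_lip hp_nonneg hp_low hpmin hsstar N hs
  nlinarith

theorem expB_integrable (hp_low : ∀ N s, 0 ≤ N → sstar ≤ s → pmin ≤ p N s) (hpmin : 0 < pmin)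
    (hsstar : 0 < sstar) (N : ℝ) : IntegrableOn (fun s => Real.exp (-(Bfun p N s))) (Ici (0:ℝ)) := by
  rw [integrableOn_Ici_iff_integrableOn_Ioi]
  refine Integrable.mono'
    (g := fun s => Real.exp (pmin * sstar) * Real.exp (-pmin * s))
    ((exp_neg_integrableOn_Ioi 0 hpmin).const_mul _)
    ((Real.continuous_exp.comp (B_cont hp_lip N).neg).aestronglyMeasurable) ?_
  filter_upwards [ae_restrict_mem measurableSet_Ioi] with s hs
  rw [Real.norm_of_nonneg (Real.exp_pos _).le]
  exact expB_le hp_lip hp_nonneg hp_low hpmin hsstar N (le_of_lt hs)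

omit hp_lip hp_nonneg in
theorem exp_pmax_integral (hpmax : 0 < pmax) :
    ∫ s in Ici (0:ℝ), Real.exp (-pmax * s) = 1 / pmax := by
  rw [MeasureTheory.integral_Ici_eq_integral_Ioi]
  have hderiv : ∀ x ∈ Ici (0:ℝ),
      HasDerivAt (fun s => -Real.exp (-pmax * s) / pmax) (Real.exp (-pmax * x)) x := by
    intro x _
    simpa [hpmax.ne'] using ((hasDerivAt_id x).const_mul pmax).neg.exp.neg.div_const pmax
  have htend : Tendsto (fun s => -Real.exp (-pmax * s) / pmax) atTop (𝓝 (-0 / pmax)) := by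
    refine Tendsto.div_const (Tendsto.neg ?_) _
    exact Real.tendsto_exp_atBot.comp (tendsto_id.const_mul_atTop_of_neg (by linarith))
  have := integral_Ioi_of_hasDerivAt_of_nonneg' hderiv
    (fun x _ => (Real.exp_pos _).le) htend
  rw [this]
  norm_num [Real.exp_zero]
  field_simp

theorem Ifun_ge (hp_low : ∀ N s, 0 ≤ N → sstar ≤ s → pmin ≤ p N s)
    (hp_up : ∀ N s, 0 ≤ N → 0 ≤ s → p N s ≤ pmax)
    (hpmin : 0 < pmin) (hpmax : 0 < pmax) (hsstar : 0 < sstar) (N : ℝ) : 1 / pmax ≤ Ifun p N := by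
  rw [← exp_pmax_integral hpmax]
  refine setIntegral_mono_on
    (Iff.mpr integrableOn_Ici_iff_integrableOn_Ioi (exp_neg_integrableOn_Ioi 0 hpmax))
    (expB_integrable hp_lip hp_nonneg hp_low hpmin hsstar N) measurableSet_Ici (fun s hs => ?_)
  apply Real.exp_le_exp.2
  have := B_le hp_lip hp_nonneg hp_up N (hs : (0:ℝ) ≤ s)
  linarith

omit hp_lip hp_nonneg

/-- The tail integral `∫_{s_*}^∞ s e^{-p_min (s-s_*)} ds`. -/
theorem tail_hasDerivAt (hpmin : 0 < pmin) (x : ℝ) :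
    HasDerivAt (fun s => -(s / pmin + 1 / pmin ^ 2) * Real.exp (-(pmin * (s - sstar))))
      (x * Real.exp (-(pmin * (x - sstar)))) x := by
  have ha : HasDerivAt (fun s : ℝ => -(s / pmin + 1 / pmin ^ 2)) (-(1 / pmin)) x :=
    (((hasDerivAt_id x).div_const pmin).add_const (1 / pmin ^ 2)).neg
  have hb : HasDerivAt (fun s : ℝ => Real.exp (-(pmin * (s - sstar))))
      (Real.exp (-(pmin * (x - sstar))) * -pmin) x := by
    have h1 := (((hasDerivAt_id x).sub_const sstar).const_mul pmin).neg
    rw [mul_one] at h1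
    exact h1.exp
  have := ha.mul hb
  refine this.congr_deriv (Eq.symm ?_)
  have hp0 : pmin ≠ 0 := hpmin.ne'
  field_simp
  ring

theorem tail_tendsto (hpmin : 0 < pmin) :
    Tendsto (fun s => -(s / pmin + 1 / pmin ^ 2) * Real.exp (-(pmin * (s - sstar))))
      atTop (𝓝 0) := by
  have base1 : Tendsto (fun s : ℝ => pmin * s * Real.exp (-(pmin * s))) atTop (𝓝 0) := by
    have h := Real.tendsto_pow_mul_exp_neg_atTop_nhds_zero 1
    have hcomp : Tendsto (fun s : ℝ => pmin * s) atTop atTop :=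
      tendsto_id.const_mul_atTop hpmin
    simpa [Function.comp_def] using h.comp hcomp
  have base2 : Tendsto (fun s : ℝ => Real.exp (-(pmin * s))) atTop (𝓝 0) := by
    refine Real.tendsto_exp_atBot.comp ?_
    have := tendsto_id.const_mul_atTop_of_neg (show -pmin < 0 by linarith) (l := atTop)
    simpa [neg_mul] using this
  set c := -Real.exp (pmin * sstar) / pmin ^ 2 with hc
  have heq : (fun s => -(s / pmin + 1 / pmin ^ 2) * Real.exp (-(pmin * (s - sstar))))
      = fun s => c * (pmin * s * Real.exp (-(pmin * s))) + c * Real.exp (-(pmin * s)) := by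
    funext s
    rw [hc]
    rw [show -(pmin * (s - sstar)) = pmin * sstar + -(pmin * s) by ring, Real.exp_add]
    field_simp
    ring
  rw [heq]
  have := (base1.const_mul c).add (base2.const_mul c)
  simpa using this

theorem tail_integral (hpmin : 0 < pmin) (hsstar : 0 < sstar) :
    ∫ s in Ioi sstar, s * Real.exp (-(pmin * (s - sstar))) = sstar / pmin + 1 / pmin ^ 2 := by
  have := integral_Ioi_of_hasDerivAt_of_nonneg'
    (g := fun s => -(s / pmin + 1 / pmin ^ 2) * Real.exp (-(pmin * (s - sstar))))
    (g' := fun x => x * Real.exp (-(pmin * (x - sstar)))) (a := sstar) (l := 0)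
    (fun x _ => tail_hasDerivAt hpmin x)
    (fun x hx => mul_nonneg (le_trans hsstar.le (le_of_lt hx)) (Real.exp_pos _).le)
    (tail_tendsto hpmin)
  rw [this]
  simp [Real.exp_zero]

theorem tail_integrable (hpmin : 0 < pmin) (hsstar : 0 < sstar) :
    IntegrableOn (fun s => s * Real.exp (-(pmin * (s - sstar)))) (Ioi sstar) :=
  integrableOn_Ioi_deriv_of_nonneg'
    (g := fun s => -(s / pmin + 1 / pmin ^ 2) * Real.exp (-(pmin * (s - sstar))))
    (g' := fun x => x * Real.exp (-(pmin * (x - sstar)))) (a := sstar) (l := 0)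
    (fun x _ => tail_hasDerivAt hpmin x)
    (fun x hx => mul_nonneg (le_trans hsstar.le (le_of_lt hx)) (Real.exp_pos _).le)
    (tail_tendsto hpmin)

/-- Dominating function for the Lipschitz estimate. -/
def dfun (pmin sstar s : ℝ) : ℝ := s * Real.exp (-(pmin * max (s - sstar) 0))

theorem dfun_int_Ioc (hpmin : 0 < pmin) : IntegrableOn (dfun pmin sstar) (Ioc 0 sstar) := by
  apply Continuous.integrableOn_Ioc
  unfold dfun
  fun_prop

theorem dfun_int_Ioi (hpmin : 0 < pmin) (hsstar : 0 < sstar) :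
    IntegrableOn (dfun pmin sstar) (Ioi sstar) := by
  refine (tail_integrable hpmin hsstar).congr_fun (fun s hs => ?_) measurableSet_Ioi
  unfold dfun
  rw [max_eq_left (by simp at hs; linarith)]

theorem dfun_int (hpmin : 0 < pmin) (hsstar : 0 < sstar) :
    IntegrableOn (dfun pmin sstar) (Ici 0) := by
  rw [integrableOn_Ici_iff_integrableOn_Ioi, ← Ioc_union_Ioi_eq_Ioi hsstar.le]
  exact (dfun_int_Ioc hpmin).union (dfun_int_Ioi hpmin hsstar)

theorem dfun_integral (hpmin : 0 < pmin) (hsstar : 0 < sstar) :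
    ∫ s in Ici (0:ℝ), dfun pmin sstar s
      = sstar ^ 2 / 2 + sstar / pmin + 1 / pmin ^ 2 := by
  rw [MeasureTheory.integral_Ici_eq_integral_Ioi, ← Ioc_union_Ioi_eq_Ioi hsstar.le,
    setIntegral_union (Ioc_disjoint_Ioi le_rfl) measurableSet_Ioi
      (dfun_int_Ioc hpmin) (dfun_int_Ioi hpmin hsstar)]
  have h1 : ∫ s in Ioc (0:ℝ) sstar, dfun pmin sstar s = sstar ^ 2 / 2 := by
    rw [setIntegral_congr_fun measurableSet_Ioc
      (fun s hs => by unfold dfun; rw [max_eq_right (by simp at hs; linarith)]; simp : 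
        EqOn (dfun pmin sstar) (fun s => s) (Ioc 0 sstar))]
    rw [← intervalIntegral.integral_of_le hsstar.le, integral_id]
    ring
  have h2 : ∫ s in Ioi sstar, dfun pmin sstar s = sstar / pmin + 1 / pmin ^ 2 := by
    rw [setIntegral_congr_fun measurableSet_Ioi
      (fun s hs => by unfold dfun; rw [max_eq_left (by simp at hs; linarith)] :
        EqOn (dfun pmin sstar) (fun s => s * Real.exp (-(pmin * (s - sstar)))) (Ioi sstar))]
    exact tail_integral hpmin hsstar
  rw [h1, h2]; ring

include hp_lip hp_nonneg in
theorem Ifun_lip (hp_low : ∀ N s, 0 ≤ N → sstar ≤ s → pmin ≤ p N s)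
    (hL : ∀ N₁ N₂ s, 0 ≤ N₁ → 0 ≤ N₂ → 0 ≤ s → |p N₁ s - p N₂ s| ≤ L * |N₁ - N₂|)
    (hL0 : 0 ≤ L) (hpmin : 0 < pmin) (hsstar : 0 < sstar) (N₁ N₂ : ℝ) :
    |Ifun p N₁ - Ifun p N₂|
      ≤ L * (sstar ^ 2 / 2 + sstar / pmin + 1 / pmin ^ 2) * |N₁ - N₂| := by
  have hint1 := expB_integrable hp_lip hp_nonneg hp_low hpmin hsstar N₁
  have hint2 := expB_integrable hp_lip hp_nonneg hp_low hpmin hsstar N₂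
  have hsub : Ifun p N₁ - Ifun p N₂
      = ∫ s in Ici (0:ℝ), (Real.exp (-(Bfun p N₁ s)) - Real.exp (-(Bfun p N₂ s))) :=
    (integral_sub hint1 hint2).symm
  have hbound : ∀ s ∈ Ici (0:ℝ),
      |Real.exp (-(Bfun p N₁ s)) - Real.exp (-(Bfun p N₂ s))|
        ≤ (L * |N₁ - N₂|) * dfun pmin sstar s := by
    intro s hs
    have hs' : (0:ℝ) ≤ s := hs
    have hc : ∀ N : ℝ, pmin * max (s - sstar) 0 ≤ Bfun p N s := by
      intro N
      rcases le_total s sstar with h | h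
      · rw [max_eq_right (by linarith)]
        simpa using B_nonneg hp_lip hp_nonneg N hs'
      · rw [max_eq_left (by linarith)]
        exact B_low hp_lip hp_nonneg hp_low hpmin hsstar N hs'
    calc |Real.exp (-(Bfun p N₁ s)) - Real.exp (-(Bfun p N₂ s))|
        ≤ |Bfun p N₁ s - Bfun p N₂ s| * Real.exp (-(pmin * max (s - sstar) 0)) :=
          expdiff (hc N₁) (hc N₂)
      _ ≤ (L * |N₁ - N₂| * s) * Real.exp (-(pmin * max (s - sstar) 0)) :=
          mul_le_mul_of_nonneg_right (B_lipN hp_lip hL hL0 N₁ N₂ hs') (Real.exp_pos _).le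
      _ = (L * |N₁ - N₂|) * dfun pmin sstar s := by unfold dfun; ring
  have hnorm : ‖∫ s in Ici (0:ℝ), (Real.exp (-(Bfun p N₁ s)) - Real.exp (-(Bfun p N₂ s)))‖
      ≤ ∫ s in Ici (0:ℝ), (L * |N₁ - N₂|) * dfun pmin sstar s := by
    apply norm_integral_le_of_norm_le ((dfun_int hpmin hsstar).const_mul _)
    filter_upwards [ae_restrict_mem measurableSet_Ici] with s hs
    rw [Real.norm_eq_abs]
    exact hbound s hs
  rw [← Real.norm_eq_abs, hsub]
  calc ‖∫ s in Ici (0:ℝ), (Real.exp (-(Bfun p N₁ s)) - Real.exp (-(Bfun p N₂ s)))‖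
      ≤ ∫ s in Ici (0:ℝ), (L * |N₁ - N₂|) * dfun pmin sstar s := hnorm
    _ = (L * |N₁ - N₂|) * ∫ s in Ici (0:ℝ), dfun pmin sstar s := integral_const_mul _ _
    _ = L * (sstar ^ 2 / 2 + sstar / pmin + 1 / pmin ^ 2) * |N₁ - N₂| := by
        rw [dfun_integral hpmin hsstar]; ring

end AgeAux
end AgeAux

open AgeAux in
/-- **Existence and uniqueness of the stationary state of the age-structured model.**
Assume `p` is bounded, Lipschitz, with `p_min 1_{[s_*,∞)}(s) ≤ p(N,s) ≤ p_max`, and that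
the Lipschitz constant `L` of `p` in its first variable satisfies
`L < p_max⁻² (s_*²/2 + s_*/p_min + 1/p_min²)⁻¹`.  Then there is a unique `N_* > 0` with
`N_* ∫_0^∞ exp(-∫_0^s p(N_*,τ) dτ) ds = 1`, and the probability density
`s ↦ N_* exp(-∫_0^s p(N_*,τ) dτ)` is the unique stationary solution. -/
theorem age_structured_stationary
    (p : ℝ → ℝ → ℝ) (L pmin pmax sstar : ℝ)
    (hpmin : 0 < pmin) (hpmax : 0 < pmax) (hsstar : 0 < sstar)
    (hp_nonneg : ∀ N s, 0 ≤ N → 0 ≤ s → 0 ≤ p N s)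
    (hp_lip : ∃ K : ℝ, ∀ N₁ s₁ N₂ s₂, 0 ≤ N₁ → 0 ≤ s₁ → 0 ≤ N₂ → 0 ≤ s₂ →
      |p N₁ s₁ - p N₂ s₂| ≤ K * (|N₁ - N₂| + |s₁ - s₂|))
    (hp_low : ∀ N s, 0 ≤ N → sstar ≤ s → pmin ≤ p N s)
    (hp_up : ∀ N s, 0 ≤ N → 0 ≤ s → p N s ≤ pmax)
    (hL : ∀ N₁ N₂ s, 0 ≤ N₁ → 0 ≤ N₂ → 0 ≤ s → |p N₁ s - p N₂ s| ≤ L * |N₁ - N₂|)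
    (hLleast : ∀ L' : ℝ,
      (∀ N₁ N₂ s, 0 ≤ N₁ → 0 ≤ N₂ → 0 ≤ s → |p N₁ s - p N₂ s| ≤ L' * |N₁ - N₂|) →
      L ≤ L')
    (hLsmall : L < 1 / (pmax ^ 2 * (sstar ^ 2 / 2 + sstar / pmin + 1 / pmin ^ 2))) :
    ∃ Nstar : ℝ, 0 < Nstar ∧
      Nstar * (∫ s in Set.Ici (0:ℝ),
        Real.exp (-(∫ τ in Set.Icc (0:ℝ) s, p Nstar τ))) = 1 ∧
      (∀ N' : ℝ, 0 < N' →
        N' * (∫ s in Set.Ici (0:ℝ),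
          Real.exp (-(∫ τ in Set.Icc (0:ℝ) s, p N' τ))) = 1 → N' = Nstar) ∧
      IsStationaryDensityAge p
        (fun s => Nstar * Real.exp (-(∫ τ in Set.Icc (0:ℝ) s, p Nstar τ))) Nstar ∧
      (∀ (f : ℝ → ℝ) (N' : ℝ), IsStationaryDensityAge p f N' →
        N' = Nstar ∧ ∀ s ∈ Set.Ici (0:ℝ),
          f s = Nstar * Real.exp (-(∫ τ in Set.Icc (0:ℝ) s, p Nstar τ))) := by
  -- basic constants
  set C := sstar ^ 2 / 2 + sstar / pmin + 1 / pmin ^ 2 with hCdef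
  have hC0 : 0 < C := by rw [hCdef]; positivity
  have hL0 : 0 ≤ L := by
    have h := hL 1 0 0 zero_le_one le_rfl le_rfl
    simp only [sub_zero, abs_one, mul_one] at h
    exact le_trans (abs_nonneg _) h
  have hk : L * (pmax ^ 2 * C) < 1 := by
    have hD : 0 < pmax ^ 2 * C := by positivity
    exact (lt_div_iff₀ hD).mp hLsmall
  -- conversion between the statement's integrals and `Bfun`/`Ifun`
  have hIcc : ∀ N : ℝ, 0 ≤ N → ∀ s : ℝ, 0 ≤ s →
      (∫ τ in Set.Icc (0:ℝ) s, p N τ) = Bfun p N s := by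
    intro N hN s hs
    rw [MeasureTheory.integral_Icc_eq_integral_Ioc]
    show _ = ∫ τ in (0:ℝ)..s, qfun p N τ
    rw [intervalIntegral.integral_of_le hs]
    refine setIntegral_congr_fun measurableSet_Ioc (fun τ hτ => ?_)
    show p N τ = p (max N 0) (max τ 0)
    rw [max_eq_left hN, max_eq_left hτ.1.le]
  have hIeq : ∀ N : ℝ, 0 ≤ N →
      (∫ s in Set.Ici (0:ℝ), Real.exp (-(∫ τ in Set.Icc (0:ℝ) s, p N τ))) = Ifun p N := by
    intro N hN
    exact setIntegral_congr_fun measurableSet_Ici (fun s hs => by rw [hIcc N hN s hs])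
  -- facts about `Ifun`
  have hIlow : ∀ N : ℝ, 1 / pmax ≤ Ifun p N :=
    fun N => Ifun_ge hp_lip hp_nonneg hp_low hp_up hpmin hpmax hsstar N
  have hIpos : ∀ N : ℝ, 0 < Ifun p N :=
    fun N => lt_of_lt_of_le (by positivity) (hIlow N)
  have hIlip : ∀ N₁ N₂ : ℝ, |Ifun p N₁ - Ifun p N₂| ≤ L * C * |N₁ - N₂| :=
    fun N₁ N₂ => Ifun_lip hp_lip hp_nonneg hp_low hL hL0 hpmin hsstar N₁ N₂
  -- uniqueness of the fixed point
  have huniq : ∀ N₁ N₂ : ℝ, 0 ≤ N₁ → 0 ≤ N₂ → N₁ * Ifun p N₁ = 1 →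
      N₂ * Ifun p N₂ = 1 → N₁ = N₂ := by
    intro N₁ N₂ h₁ h₂ he₁ he₂
    by_contra hne
    have habs : 0 < |N₁ - N₂| := abs_pos.2 (sub_ne_zero.2 hne)
    have hi₁ : 0 < Ifun p N₁ := hIpos N₁
    have hi₂ : 0 < Ifun p N₂ := hIpos N₂
    have hn₁ : N₁ = 1 / Ifun p N₁ := by rw [eq_div_iff hi₁.ne']; exact he₁
    have hn₂ : N₂ = 1 / Ifun p N₂ := by rw [eq_div_iff hi₂.ne']; exact he₂
    have hkey : (N₁ - N₂) * (Ifun p N₁ * Ifun p N₂) = Ifun p N₂ - Ifun p N₁ := by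
      linear_combination Ifun p N₂ * he₁ - Ifun p N₁ * he₂
    have hest : |N₁ - N₂| * (Ifun p N₁ * Ifun p N₂) ≤ L * C * |N₁ - N₂| := by
      calc |N₁ - N₂| * (Ifun p N₁ * Ifun p N₂)
          = |(N₁ - N₂) * (Ifun p N₁ * Ifun p N₂)| := by
            rw [abs_mul, abs_of_pos (mul_pos hi₁ hi₂)]
        _ = |Ifun p N₂ - Ifun p N₁| := by rw [hkey]
        _ ≤ L * C * |N₂ - N₁| := hIlip N₂ N₁
        _ = L * C * |N₁ - N₂| := by rw [abs_sub_comm]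
    have hII : 1 / pmax * (1 / pmax) ≤ Ifun p N₁ * Ifun p N₂ :=
      mul_le_mul (hIlow N₁) (hIlow N₂) (by positivity) hi₁.le
    have h3 : |N₁ - N₂| * (1 / pmax * (1 / pmax)) ≤ L * C * |N₁ - N₂| :=
      le_trans (mul_le_mul_of_nonneg_left hII habs.le) hest
    have h5 : |N₁ - N₂| ≤ L * C * |N₁ - N₂| * (pmax * pmax) := by
      calc |N₁ - N₂| = |N₁ - N₂| * (1 / pmax * (1 / pmax)) * (pmax * pmax) := by
            field_simp
        _ ≤ L * C * |N₁ - N₂| * (pmax * pmax) :=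
            mul_le_mul_of_nonneg_right h3 (mul_pos hpmax hpmax).le
    have h6 : L * C * |N₁ - N₂| * (pmax * pmax) = (L * (pmax ^ 2 * C)) * |N₁ - N₂| := by
      ring
    rw [h6] at h5
    nlinarith [mul_lt_mul_of_pos_right hk habs]
  -- existence of the fixed point via IVT
  have hIc : Continuous (Ifun p) := by
    refine LipschitzWith.continuous (K := (L * C).toNNReal) ?_
    rw [lipschitzWith_iff_dist_le_mul]
    intro x y
    rw [Real.dist_eq, Real.dist_eq, Real.coe_toNNReal',
      max_eq_left (mul_nonneg hL0 hC0.le)]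
    exact hIlip x y
  have hcontPhi : ContinuousOn (fun N => N * Ifun p N) (Icc 0 pmax) :=
    (continuous_id.mul hIc).continuousOn
  have hmem : (1:ℝ) ∈ Icc ((fun N => N * Ifun p N) 0) ((fun N => N * Ifun p N) pmax) := by
    constructor
    · simp
    · show (1:ℝ) ≤ pmax * Ifun p pmax
      calc (1:ℝ) = pmax * (1 / pmax) := by field_simp
        _ ≤ pmax * Ifun p pmax := mul_le_mul_of_nonneg_left (hIlow pmax) hpmax.le
  obtain ⟨Nstar, hNmem, hNeq⟩ := intermediate_value_Icc hpmax.le hcontPhi hmem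
  simp only at hNeq
  have hNpos : 0 < Nstar := by
    rcases hNmem.1.eq_or_lt with h | h
    · exfalso; rw [← h, zero_mul] at hNeq; norm_num at hNeq
    · exact h
  have hq_eq : ∀ N : ℝ, 0 ≤ N → ∀ u : ℝ, 0 < u → p N u = qfun p N u := by
    intro N hN u hu
    show p N u = p (max N 0) (max u 0)
    rw [max_eq_left hN, max_eq_left hu.le]
  -- tendsto fact used twice
  have hexp_tendsto : ∀ N : ℝ,
      Tendsto (fun u => Real.exp (-(Bfun p N u))) atTop (𝓝 0) := by
    intro N
    apply squeeze_zero' (Filter.Eventually.of_forall (fun u => (Real.exp_pos _).le))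
    · filter_upwards [eventually_ge_atTop (0:ℝ)] with u hu
      exact expB_le hp_lip hp_nonneg hp_low hpmin hsstar N hu
    · have hb : Tendsto (fun u : ℝ => Real.exp (-pmin * u)) atTop (𝓝 0) :=
        Real.tendsto_exp_atBot.comp (tendsto_id.const_mul_atTop_of_neg (by linarith))
      simpa using hb.const_mul (Real.exp (pmin * sstar))
  have hB0 : ∀ N : ℝ, Bfun p N 0 = 0 := fun N => intervalIntegral.integral_same
  -- the key FTC computation
  have hFTC : ∀ N : ℝ,
      ∫ u in Ioi (0:ℝ), qfun p N u * Real.exp (-(Bfun p N u)) = 1 := by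
    intro N
    have hderiv : ∀ x ∈ Ioi (0:ℝ), HasDerivAt (fun u => -Real.exp (-(Bfun p N u)))
        (qfun p N x * Real.exp (-(Bfun p N x))) x := by
      intro x _
      have h := ((B_hasDerivAt hp_lip N x).neg.exp).neg
      refine h.congr_deriv ?_
      simp only [Pi.neg_apply]
      ring
    have hcont : ContinuousWithinAt (fun u => -Real.exp (-(Bfun p N u))) (Ici 0) 0 :=
      ((Real.continuous_exp.comp (B_cont hp_lip N).neg).neg).continuousWithinAt
    have htend : Tendsto (fun u => -Real.exp (-(Bfun p N u))) atTop (𝓝 0) := by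
      rw [show (0:ℝ) = -0 by ring]
      exact (hexp_tendsto N).neg
    have h := integral_Ioi_of_hasDerivAt_of_nonneg hcont hderiv
      (fun x _ => mul_nonneg (q_nonneg hp_nonneg _ _) (Real.exp_pos _).le) htend
    rw [h, hB0 N]
    simp
  refine ⟨Nstar, hNpos, ?_, ?_, ?_, ?_⟩
  · rw [hIeq Nstar hNpos.le]; exact hNeq
  · intro N' hN' heq
    rw [hIeq N' hN'.le] at heq
    exact huniq N' Nstar hN'.le hNpos.le heq hNeq
  · -- the explicit density is a stationary solution
    refine ⟨?_, ?_, ?_, ?_, ?_, ?_⟩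
    · refine ContinuousOn.congr
        (f := fun s => Nstar * Real.exp (-(Bfun p Nstar s)))
        ((continuous_const.mul
          (Real.continuous_exp.comp (B_cont hp_lip Nstar).neg)).continuousOn)
        (fun s hs => ?_)
      simp only
      rw [hIcc Nstar hNpos.le s hs]
    · intro s hs
      have hsp : (0:ℝ) < s := hs
      have hB := B_hasDerivAt hp_lip Nstar s
      have hg : HasDerivAt (fun u => Nstar * Real.exp (-(Bfun p Nstar u)))
          (Nstar * (Real.exp (-(Bfun p Nstar s)) * -(qfun p Nstar s))) s :=
        (hB.neg.exp).const_mul Nstar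
      have hev : (fun u => Nstar * Real.exp (-(∫ τ in Set.Icc (0:ℝ) u, p Nstar τ)))
          =ᶠ[𝓝 s] (fun u => Nstar * Real.exp (-(Bfun p Nstar u))) := by
        filter_upwards [Ioi_mem_nhds hsp] with u hu
        rw [hIcc Nstar hNpos.le u (le_of_lt hu)]
      have hfinal := hg.congr_of_eventuallyEq hev
      refine hfinal.congr_deriv (Eq.symm ?_)
      show -(p Nstar s * (Nstar * Real.exp (-(∫ τ in Set.Icc (0:ℝ) s, p Nstar τ))))
        = Nstar * (Real.exp (-(Bfun p Nstar s)) * -(qfun p Nstar s))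
      rw [hIcc Nstar hNpos.le s hsp.le, hq_eq Nstar hNpos.le s hsp]
      ring
    · intro s _
      positivity
    · rw [MeasureTheory.integral_const_mul, hIeq Nstar hNpos.le]
      exact hNeq
    · simp only [Set.Icc_self]
      rw [MeasureTheory.integral_singleton]
      simp [Real.volume_singleton, Measure.real]
    · rw [MeasureTheory.integral_Ici_eq_integral_Ioi]
      have hcongr : (∫ u in Ioi (0:ℝ),
            p Nstar u * (Nstar * Real.exp (-(∫ τ in Set.Icc (0:ℝ) u, p Nstar τ))))
          = ∫ u in Ioi (0:ℝ), Nstar * (qfun p Nstar u * Real.exp (-(Bfun p Nstar u))) := by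
        refine setIntegral_congr_fun measurableSet_Ioi (fun u hu => ?_)
        have hu0 : (0:ℝ) < u := hu
        show p Nstar u * (Nstar * Real.exp (-(∫ τ in Set.Icc (0:ℝ) u, p Nstar τ)))
          = Nstar * (qfun p Nstar u * Real.exp (-(Bfun p Nstar u)))
        rw [hIcc Nstar hNpos.le u hu0.le, hq_eq Nstar hNpos.le u hu0]
        ring
      rw [hcongr, MeasureTheory.integral_const_mul, hFTC Nstar, mul_one]
  · -- uniqueness of the stationary solution
    intro f N' hf
    obtain ⟨hc, hd, hnn, hint, h0, -⟩ := hf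
    have hN'0 : 0 ≤ N' := h0 ▸ hnn 0 Set.self_mem_Ici
    have hgder : ∀ u ∈ Ioi (0:ℝ),
        HasDerivAt (fun u => f u * Real.exp (Bfun p N' u)) 0 u := by
      intro u hu
      have hu0 : (0:ℝ) < u := hu
      have h1 := hd u hu
      have h2 : HasDerivAt (fun v => Real.exp (Bfun p N' v))
          (Real.exp (Bfun p N' u) * qfun p N' u) u :=
        (B_hasDerivAt hp_lip N' u).exp
      have h3 := h1.mul h2
      refine h3.congr_deriv (Eq.symm ?_)
      rw [hq_eq N' hN'0 u hu0]
      ring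
    have hgcont : ContinuousOn (fun u => f u * Real.exp (Bfun p N' u)) (Ici 0) :=
      hc.mul (Real.continuous_exp.comp (B_cont hp_lip N')).continuousOn
    have hg0 : f 0 * Real.exp (Bfun p N' 0) = N' := by
      rw [hB0 N', Real.exp_zero, mul_one, h0]
    have hval : ∀ u : ℝ, 0 ≤ u → f u = N' * Real.exp (-(Bfun p N' u)) := by
      intro u hu
      have h1 : f u * Real.exp (Bfun p N' u) = N' :=
        (const_of_deriv0 hgcont hgder hu).trans hg0
      rw [Real.exp_neg, ← div_eq_mul_inv, eq_div_iff (Real.exp_ne_zero _)]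
      exact h1
    have hIN' : N' * Ifun p N' = 1 := by
      have hcongr : (∫ s in Set.Ici (0:ℝ), f s)
          = ∫ s in Set.Ici (0:ℝ), N' * Real.exp (-(Bfun p N' s)) :=
        setIntegral_congr_fun measurableSet_Ici (fun s hs => hval s hs)
      rw [hint, MeasureTheory.integral_const_mul] at hcongr
      exact hcongr.symm
    have hN'pos : 0 < N' := by
      rcases hN'0.eq_or_lt with h | h
      · exfalso; rw [← h, zero_mul] at hIN'; norm_num at hIN'
      · exact h
    have hNN : N' = Nstar := huniq N' Nstar hN'0 hNpos.le hIN' hNeq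
    refine ⟨hNN, fun s hs => ?_⟩
    rw [hval s hs, hNN, hIcc Nstar hNpos.le s hs]
end
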